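/- Assume θ_1 < 1 and write w_θ(x,Q) := w_θ(x,Q;𝟏) with 𝟏=(1,…,1)∈ℝ^K. Suppose that the minimum in the dual recursive formula w_θ(x,Q) = (1−θ_1)·min_{τ∈Δ(J)^L} min_{(x_{ij}): Σ_j x_{ij}=(x−θ_1 G^Q_{iτ})/(1−θ_1) ∀i} max_{i∈I} Σ_{j∈J} w_{θ^+}(x_{ij},Q_j;ζ_j) is attained at a pair (τ,(x_{ij})) with τ non-revealing, i.e. τ^ℓ = τ̄∈Δ(J) for all ℓ∈L. Then w_θ(x,Q) = (1−θ_1)·max_{i∈I} w_{θ^+}( (x − θ_1·G^Q_{iτ̄})/(1−θ_1), Q ), where G^{k,Q}_{iτ̄} := Σ_{ℓ,j} Q(ℓ|k)τ̄(j)G^{kℓ}(i,j), and in the formula Q_j, ζ_j are determined by Q, τ, ζ=𝟏 as: P^Q_τ(j|k) := Σ_ℓ Q(ℓ|k)τ^ℓ(j); Q_j(ℓ|k) := Q(ℓ|k)τ^ℓ(j)/P^Q_τ(j|k) if P^Q_τ(j|k)>0 and Q_j(·|k) := Q(·|k) otherwise; ζ_j^k := P^Q_τ(j|k). -/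

import Mathlib

open scoped BigOperators

noncomputable section RepeatedGames

/-- Probability of a finite history (list of action pairs, in chronological
order) under behavioral strategies `s`, `t` (which map the list of past action
pairs to a mixed action). -/
def probH {I J : Type*} (s : List (I × J) → I → ℝ) (t : List (I × J) → J → ℝ) :
    List (I × J) → ℝ
  | [] => 1
  | a :: h =>
      s [] a.1 * t [] a.2 *
        probH (fun h' => s (a :: h')) (fun h' => t (a :: h')) h

/-- Expected stage payoff at stage `m+1` (i.e. after `m` completed stages). -/
def stagePay {I J : Type*} [Fintype I] [Fintype J]
    (s : List (I × J) → I → ℝ) (t : List (I × J) → J → ℝ)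
    (g : I → J → ℝ) (m : ℕ) : ℝ :=
  ∑ h : Fin m → I × J,
    probH s t (List.ofFn h) *
      ∑ i, ∑ j, s (List.ofFn h) i * t (List.ofFn h) j * g i j

/-- Behavioral strategies of a player with type set `X` and action set `A`,
observing histories in `(I × J)^*`. -/
def Strat (I J X A : Type*) [Fintype A] : Type _ :=
  {f : X → List (I × J) → A → ℝ // ∀ x h, f x h ∈ stdSimplex ℝ A}

instance {I J X A : Type*} [Fintype A] [Nonempty A] :
    Nonempty (Strat I J X A) := by
  refine ⟨⟨fun _ _ _ => (Fintype.card A : ℝ)⁻¹, fun x h => ⟨fun a => by positivity, ?_⟩⟩⟩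
  have hA : (Fintype.card A : ℝ) ≠ 0 := by
    exact_mod_cast Fintype.card_ne_zero
  simp [Finset.sum_const, Finset.card_univ, nsmul_eq_mul, mul_inv_cancel₀ hA]

/-- The auxiliary `θ`-weighted payoff `γ_θ(π, ŝ, t̂; ζ)`. -/
def payA {I J K L : Type*} [Fintype I] [Fintype J] [Fintype K] [Fintype L]
    (θ : ℕ → ℝ) (G : K → L → I → J → ℝ) (π : K × L → ℝ) (ζ : K → ℝ)
    (s : Strat I J K I) (t : Strat I J L J) : ℝ :=
  ∑ k, ∑ l, π (k, l) * ζ k *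
    ∑' m : ℕ, θ m * stagePay (s.1 k) (t.1 l) (G k l) m

/-- The `θ`-weighted payoff `γ_θ(π, ŝ, t̂)`. -/
def pay {I J K L : Type*} [Fintype I] [Fintype J] [Fintype K] [Fintype L]
    (θ : ℕ → ℝ) (G : K → L → I → J → ℝ) (π : K × L → ℝ)
    (s : Strat I J K I) (t : Strat I J L J) : ℝ :=
  payA θ G π (fun _ => 1) s t

/-- Maxmin `v⁻_θ(π)` of the repeated game `𝒢_θ(π)`. -/
def vMinus {I J K L : Type*} [Fintype I] [Fintype J] [Fintype K] [Fintype L]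
    (θ : ℕ → ℝ) (G : K → L → I → J → ℝ) (π : K × L → ℝ) : ℝ :=
  ⨆ s : Strat I J K I, ⨅ t : Strat I J L J, pay θ G π s t

/-- Minmax `v⁺_θ(π)` of the repeated game `𝒢_θ(π)`. -/
def vPlus {I J K L : Type*} [Fintype I] [Fintype J] [Fintype K] [Fintype L]
    (θ : ℕ → ℝ) (G : K → L → I → J → ℝ) (π : K × L → ℝ) : ℝ :=
  ⨅ t : Strat I J L J, ⨆ s : Strat I J K I, pay θ G π s t

/-- Dual payoff `h_θ[x,Q;ζ](p,ŝ,t̂) = γ_θ(p⊗Q, ŝ, t̂; ζ) − ⟨p,x⟩`. -/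
def hDual {I J K L : Type*} [Fintype I] [Fintype J] [Fintype K] [Fintype L]
    (θ : ℕ → ℝ) (G : K → L → I → J → ℝ) (x : K → ℝ) (Q : K → L → ℝ)
    (ζ : K → ℝ) (p : K → ℝ) (s : Strat I J K I) (t : Strat I J L J) : ℝ :=
  payA θ G (fun kl => p kl.1 * Q kl.1 kl.2) ζ s t - ∑ k, p k * x k

/-- Maxmin `w⁻_θ(x,Q;ζ)` of the dual game `𝒟[𝒢_θ](x,Q;ζ)`. -/
def wMinus {I J K L : Type*} [Fintype I] [Fintype J] [Fintype K] [Fintype L]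
    (θ : ℕ → ℝ) (G : K → L → I → J → ℝ) (x : K → ℝ) (Q : K → L → ℝ)
    (ζ : K → ℝ) : ℝ :=
  ⨆ ps : stdSimplex ℝ K × Strat I J K I, ⨅ t : Strat I J L J,
    hDual θ G x Q ζ (ps.1 : K → ℝ) ps.2 t

/-- Minmax `w⁺_θ(x,Q;ζ)` of the dual game `𝒟[𝒢_θ](x,Q;ζ)`. -/
def wPlus {I J K L : Type*} [Fintype I] [Fintype J] [Fintype K] [Fintype L]
    (θ : ℕ → ℝ) (G : K → L → I → J → ℝ) (x : K → ℝ) (Q : K → L → ℝ)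
    (ζ : K → ℝ) : ℝ :=
  ⨅ t : Strat I J L J, ⨆ ps : stdSimplex ℝ K × Strat I J K I,
    hDual θ G x Q ζ (ps.1 : K → ℝ) ps.2 t

end RepeatedGames
set_option linter.unusedSectionVars false
section Hist
variable {I J : Type*} [Fintype I] [Fintype J]

/-- player-1 part of history probability -/
def sProb (s : List (I × J) → I → ℝ) : List (I × J) → ℝ
  | [] => 1
  | a :: h => s [] a.1 * sProb (fun h' => s (a :: h')) h

/-- player-2 part of history probability -/
def tProb (t : List (I × J) → J → ℝ) : List (I × J) → ℝ
  | [] => 1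
  | a :: h => t [] a.2 * tProb (fun h' => t (a :: h')) h

lemma probH_eq (s : List (I × J) → I → ℝ) (t : List (I × J) → J → ℝ) :
    ∀ h, probH s t h = sProb s h * tProb t h := by
  intro h
  induction h generalizing s t with
  | nil => simp [probH, sProb, tProb]
  | cons a h ih => simp [probH, sProb, tProb, ih]; ring

lemma sProb_nonneg {s : List (I × J) → I → ℝ}
    (hs : ∀ h, s h ∈ stdSimplex ℝ I) : ∀ h, 0 ≤ sProb s h := by
  intro h
  induction h generalizing s with
  | nil => simp [sProb]
  | cons a h ih =>
      exact mul_nonneg ((hs []).1 a.1) (ih (fun h' => hs (a :: h')))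

lemma tProb_nonneg {t : List (I × J) → J → ℝ}
    (ht : ∀ h, t h ∈ stdSimplex ℝ J) : ∀ h, 0 ≤ tProb t h := by
  intro h
  induction h generalizing t with
  | nil => simp [tProb]
  | cons a h ih =>
      exact mul_nonneg ((ht []).1 a.2) (ih (fun h' => ht (a :: h')))

lemma probH_nonneg {s : List (I × J) → I → ℝ} {t : List (I × J) → J → ℝ}
    (hs : ∀ h, s h ∈ stdSimplex ℝ I) (ht : ∀ h, t h ∈ stdSimplex ℝ J)
    (h : List (I × J)) : 0 ≤ probH s t h := by
  rw [probH_eq]; exact mul_nonneg (sProb_nonneg hs h) (tProb_nonneg ht h)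

/-- reindexing sums over `Fin (m+1) → α` -/
lemma sum_ofFn_succ {α : Type*} [Fintype α] {m : ℕ} (F : List α → ℝ) :
    ∑ h : Fin (m+1) → α, F (List.ofFn h)
      = ∑ a : α, ∑ h : Fin m → α, F (a :: List.ofFn h) := by
  calc ∑ h : Fin (m+1) → α, F (List.ofFn h)
      = ∑ p : α × (Fin m → α), F (p.1 :: List.ofFn p.2) := by
        apply Fintype.sum_equiv (Fin.consEquiv (fun _ : Fin (m+1) => α)).symm
        intro h
        have : List.ofFn h = h 0 :: List.ofFn (fun i : Fin m => h i.succ) :=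
          List.ofFn_succ (f := h)
        simp [Fin.consEquiv, this]; rfl
    _ = ∑ a : α, ∑ h : Fin m → α, F (a :: List.ofFn h) := Fintype.sum_prod_type _

lemma sum_probH {s : List (I × J) → I → ℝ} {t : List (I × J) → J → ℝ}
    (hs : ∀ h, s h ∈ stdSimplex ℝ I) (ht : ∀ h, t h ∈ stdSimplex ℝ J) :
    ∀ m, ∑ h : Fin m → I × J, probH s t (List.ofFn h) = 1 := by
  intro m
  induction m generalizing s t with
  | zero => simp [probH]
  | succ m ih =>
      rw [sum_ofFn_succ (F := fun h => probH s t h)]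
      have : ∀ a : I × J, ∑ h : Fin m → I × J, probH s t (a :: List.ofFn h)
          = s [] a.1 * t [] a.2 := by
        intro a
        simp only [probH]
        rw [← Finset.mul_sum,
          ih (fun h' => hs (a :: h')) (fun h' => ht (a :: h')), mul_one]
      rw [Finset.sum_congr rfl (fun a _ => this a), Fintype.sum_prod_type]
      simp only [← Finset.sum_mul, ← Finset.mul_sum]
      rw [(hs []).2]
      simp only [one_mul]
      exact (ht []).2

end Hist
set_option linter.unusedSectionVars false
section Stage
variable {I J : Type*} [Fintype I] [Fintype J]

lemma stagePay_zero (s : List (I × J) → I → ℝ) (t : List (I × J) → J → ℝ)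
    (g : I → J → ℝ) :
    stagePay s t g 0 = ∑ i, ∑ j, s [] i * t [] j * g i j := by
  simp [stagePay, probH, List.ofFn]

lemma stagePay_succ (s : List (I × J) → I → ℝ) (t : List (I × J) → J → ℝ)
    (g : I → J → ℝ) (m : ℕ) :
    stagePay s t g (m+1) = ∑ a : I × J, s [] a.1 * t [] a.2 *
      stagePay (fun h' => s (a :: h')) (fun h' => t (a :: h')) g m := by
  unfold stagePay
  rw [sum_ofFn_succ (F := fun h => probH s t h *
      ∑ i, ∑ j, s h i * t h j * g i j)]
  apply Finset.sum_congr rfl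
  intro a _
  rw [Finset.mul_sum]
  apply Finset.sum_congr rfl
  intro h _
  simp only [probH]
  ring

lemma abs_inner_le {s : I → ℝ} {t : J → ℝ}
    (hs : s ∈ stdSimplex ℝ I) (ht : t ∈ stdSimplex ℝ J) (g : I → J → ℝ) :
    |∑ i, ∑ j, s i * t j * g i j| ≤ ∑ i, ∑ j, |g i j| := by
  have h1 : |∑ i, ∑ j, s i * t j * g i j| ≤ ∑ i, ∑ j, |s i * t j * g i j| := by
    refine (Finset.abs_sum_le_sum_abs _ _).trans ?_
    exact Finset.sum_le_sum fun i _ => Finset.abs_sum_le_sum_abs _ _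
  refine h1.trans (Finset.sum_le_sum fun i _ => Finset.sum_le_sum fun j _ => ?_)
  rw [abs_mul, abs_mul, abs_of_nonneg (hs.1 i), abs_of_nonneg (ht.1 j)]
  have hi1 : s i ≤ 1 := by
    rw [← hs.2]
    exact Finset.single_le_sum (fun a _ => hs.1 a) (Finset.mem_univ i)
  have hj1 : t j ≤ 1 := by
    rw [← ht.2]
    exact Finset.single_le_sum (fun a _ => ht.1 a) (Finset.mem_univ j)
  have h2 : s i * t j ≤ 1 := by nlinarith [hs.1 i, ht.1 j]
  calc s i * t j * |g i j| ≤ 1 * |g i j| :=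
        mul_le_mul_of_nonneg_right h2 (abs_nonneg _)
    _ = |g i j| := one_mul _

end Stage
set_option linter.unusedSectionVars false
section Bounds
variable {I J : Type*} [Fintype I] [Fintype J]

lemma abs_stagePay_le {s : List (I × J) → I → ℝ} {t : List (I × J) → J → ℝ}
    (hs : ∀ h, s h ∈ stdSimplex ℝ I) (ht : ∀ h, t h ∈ stdSimplex ℝ J)
    (g : I → J → ℝ) (m : ℕ) :
    |stagePay s t g m| ≤ ∑ i, ∑ j, |g i j| := by
  unfold stagePay
  refine (Finset.abs_sum_le_sum_abs _ _).trans ?_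
  have : ∀ h : Fin m → I × J,
      |probH s t (List.ofFn h) * ∑ i, ∑ j,
        s (List.ofFn h) i * t (List.ofFn h) j * g i j|
      ≤ probH s t (List.ofFn h) * (∑ i, ∑ j, |g i j|) := by
    intro h
    rw [abs_mul, abs_of_nonneg (probH_nonneg hs ht _)]
    exact mul_le_mul_of_nonneg_left
      (abs_inner_le (hs _) (ht _) g) (probH_nonneg hs ht _)
  refine (Finset.sum_le_sum fun h _ => this h).trans ?_
  rw [← Finset.sum_mul, sum_probH hs ht m, one_mul]

lemma summable_stage {θ' : ℕ → ℝ} (hsum : Summable θ') (hnn : ∀ m, 0 ≤ θ' m)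
    {s : List (I × J) → I → ℝ} {t : List (I × J) → J → ℝ}
    (hs : ∀ h, s h ∈ stdSimplex ℝ I) (ht : ∀ h, t h ∈ stdSimplex ℝ J)
    (g : I → J → ℝ) :
    Summable (fun m => θ' m * stagePay s t g m) := by
  apply Summable.of_norm_bounded (g := fun m => θ' m * (∑ i, ∑ j, |g i j|))
    (hsum.mul_right _)
  intro m
  rw [Real.norm_eq_abs, abs_mul, abs_of_nonneg (hnn m)]
  exact mul_le_mul_of_nonneg_left (abs_stagePay_le hs ht g m) (hnn m)

lemma abs_tsum_stage_le {θ' : ℕ → ℝ} (hsum : Summable θ') (hnn : ∀ m, 0 ≤ θ' m)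
    {s : List (I × J) → I → ℝ} {t : List (I × J) → J → ℝ}
    (hs : ∀ h, s h ∈ stdSimplex ℝ I) (ht : ∀ h, t h ∈ stdSimplex ℝ J)
    (g : I → J → ℝ) :
    |∑' m, θ' m * stagePay s t g m| ≤ (∑' m, θ' m) * (∑ i, ∑ j, |g i j|) := by
  rw [← tsum_mul_right]
  have hsm := summable_stage hsum hnn hs ht g
  have habs : Summable fun m => |θ' m| * |stagePay s t g m| := by
    simpa [abs_mul] using hsm.abs
  have h1 : |∑' m, θ' m * stagePay s t g m| ≤ ∑' m, |θ' m| * |stagePay s t g m| := by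
    have := norm_tsum_le_tsum_norm (f := fun m => θ' m * stagePay s t g m)
      (by simpa [Real.norm_eq_abs, abs_mul] using hsm.abs)
    simpa [Real.norm_eq_abs, abs_mul] using this
  refine h1.trans (Summable.tsum_le_tsum ?_ habs (hsum.mul_right _))
  intro m
  rw [abs_of_nonneg (hnn m)]
  exact mul_le_mul_of_nonneg_left (abs_stagePay_le hs ht g m) (hnn m)

end Bounds
set_option linter.unusedSectionVars false
section PayA
variable {K L I J : Type*} [Fintype K] [Fintype L] [Fintype I] [Fintype J]

lemma tsum_stage_split {θ : ℕ → ℝ} (hsum : Summable θ) (hnn : ∀ m, 0 ≤ θ m)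
    {s : List (I × J) → I → ℝ} {t : List (I × J) → J → ℝ}
    (hs : ∀ h, s h ∈ stdSimplex ℝ I) (ht : ∀ h, t h ∈ stdSimplex ℝ J)
    (g : I → J → ℝ) :
    ∑' m, θ m * stagePay s t g m
      = θ 0 * (∑ i, ∑ j, s [] i * t [] j * g i j)
        + ∑ a : I × J, s [] a.1 * t [] a.2 *
            ∑' m, θ (m+1) * stagePay (fun h => s (a::h)) (fun h => t (a::h)) g m := by
  have hsm := summable_stage hsum hnn hs ht g
  have hsum' : Summable (fun m => θ (m+1)) := (summable_nat_add_iff 1).2 hsum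
  have hnn' : ∀ m, 0 ≤ θ (m+1) := fun m => hnn (m+1)
  rw [Summable.tsum_eq_zero_add hsm, stagePay_zero]
  congr 1
  have hstep : ∀ m : ℕ, θ (m+1) * stagePay s t g (m+1)
      = ∑ a : I × J, s [] a.1 * t [] a.2 *
          (θ (m+1) * stagePay (fun h => s (a::h)) (fun h => t (a::h)) g m) := by
    intro m
    rw [stagePay_succ, Finset.mul_sum]
    exact Finset.sum_congr rfl fun a _ => by ring
  rw [tsum_congr hstep, Summable.tsum_finsetSum]
  · exact Finset.sum_congr rfl fun a _ => by
      rw [← tsum_mul_left]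
  · intro a _
    exact (summable_stage hsum' hnn' (fun h => hs (a::h)) (fun h => ht (a::h)) g).mul_left _

/-- uniform bound for the dual payoff -/
noncomputable def dualBound (θ' : ℕ → ℝ) (G : K → L → I → J → ℝ) (x : K → ℝ) (ζ : K → ℝ) : ℝ :=
  (∑ k, ∑ l, |ζ k| * ((∑' m, θ' m) * ∑ i, ∑ j, |G k l i j|)) + ∑ k, |x k|

lemma abs_hDual_le {θ' : ℕ → ℝ} (hsum : Summable θ') (hnn : ∀ m, 0 ≤ θ' m)
    (G : K → L → I → J → ℝ) (x : K → ℝ) {Q : K → L → ℝ}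
    (hQ : ∀ k, Q k ∈ stdSimplex ℝ L) (ζ : K → ℝ) {p : K → ℝ}
    (hp : p ∈ stdSimplex ℝ K) (s : Strat I J K I) (t : Strat I J L J) :
    |hDual θ' G x Q ζ p s t| ≤ dualBound θ' G x ζ := by
  unfold hDual dualBound
  refine (abs_sub _ _).trans (add_le_add ?_ ?_)
  · unfold payA
    refine (Finset.abs_sum_le_sum_abs _ _).trans
      (Finset.sum_le_sum fun k _ => (Finset.abs_sum_le_sum_abs _ _).trans
        (Finset.sum_le_sum fun l _ => ?_))
    rw [abs_mul, abs_mul]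
    have hb := abs_tsum_stage_le hsum hnn (s.2 k) (t.2 l) (G k l)
    have hp1 : |p k| ≤ 1 := by
      rw [abs_of_nonneg (hp.1 k), ← hp.2]
      exact Finset.single_le_sum (fun a _ => hp.1 a) (Finset.mem_univ k)
    have hq1 : |Q k l| ≤ 1 := by
      rw [abs_of_nonneg ((hQ k).1 l), ← (hQ k).2]
      exact Finset.single_le_sum (fun a _ => (hQ k).1 a) (Finset.mem_univ l)
    calc |p k * Q k l| * |ζ k| * |∑' m, θ' m * stagePay (s.1 k) (t.1 l) (G k l) m|
        ≤ 1 * |ζ k| * ((∑' m, θ' m) * ∑ i, ∑ j, |G k l i j|) := by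
          refine mul_le_mul (mul_le_mul_of_nonneg_right ?_ (abs_nonneg _)) hb
            (abs_nonneg _) (by positivity)
          rw [abs_mul]
          exact mul_le_one₀ hp1 (abs_nonneg _) hq1
      _ = |ζ k| * ((∑' m, θ' m) * ∑ i, ∑ j, |G k l i j|) := by ring
  · refine (Finset.abs_sum_le_sum_abs _ _).trans (Finset.sum_le_sum fun k _ => ?_)
    rw [abs_mul, abs_of_nonneg (hp.1 k)]
    have hp1 : p k ≤ 1 := by
      rw [← hp.2]
      exact Finset.single_le_sum (fun a _ => hp.1 a) (Finset.mem_univ k)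
    calc p k * |x k| ≤ 1 * |x k| := mul_le_mul_of_nonneg_right hp1 (abs_nonneg _)
      _ = |x k| := one_mul _

lemma payA_pi_smul (θ' : ℕ → ℝ) (G : K → L → I → J → ℝ) (π : K × L → ℝ)
    (ζ : K → ℝ) (c : ℝ) (s : Strat I J K I) (t : Strat I J L J) :
    payA θ' G (fun kl => c * π kl) ζ s t = c * payA θ' G π ζ s t := by
  unfold payA
  rw [Finset.mul_sum]
  exact Finset.sum_congr rfl fun k _ => by
    rw [Finset.mul_sum]; exact Finset.sum_congr rfl fun l _ => by ring

lemma payA_zeta_const (θ' : ℕ → ℝ) (G : K → L → I → J → ℝ) (π : K × L → ℝ)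
    (c : ℝ) (s : Strat I J K I) (t : Strat I J L J) :
    payA θ' G π (fun _ => c) s t = c * payA θ' G π (fun _ => 1) s t := by
  unfold payA
  rw [Finset.mul_sum]
  exact Finset.sum_congr rfl fun k _ => by
    rw [Finset.mul_sum]; exact Finset.sum_congr rfl fun l _ => by ring

end PayA
set_option linter.unusedSectionVars false
section Mix
variable {I J : Type*} [Fintype I] [Fintype J]

/-- realization-weight denominator of a mixture of player-2 strategies -/
def mixD (c : J → ℝ) (ts : J → List (I × J) → J → ℝ) (h : List (I × J)) : ℝ :=
  ∑ j, c j * tProb (ts j) h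

/-- Kuhn mixture of player-2 behavioral strategies with weights `c` -/
noncomputable def tmixRaw (c : J → ℝ) (ts : J → List (I × J) → J → ℝ)
    (h : List (I × J)) (b : J) : ℝ :=
  if 0 < mixD c ts h then
    (∑ j, c j * tProb (ts j) h * ts j h b) / mixD c ts h
  else (Fintype.card J : ℝ)⁻¹

lemma tmixRaw_shift (c : J → ℝ) (ts : J → List (I × J) → J → ℝ)
    (a : I × J) :
    (fun h' => tmixRaw c ts (a :: h'))
      = tmixRaw (fun j => c j * ts j [] a.2) (fun j h' => ts j (a :: h')) := by
  funext h b
  have hD : mixD c ts (a :: h)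
      = mixD (fun j => c j * ts j [] a.2) (fun j h' => ts j (a :: h')) h := by
    unfold mixD
    exact Finset.sum_congr rfl fun j _ => by
      show c j * tProb (ts j) (a :: h) = _
      simp only [tProb]; ring
  have hN : (∑ j, c j * tProb (ts j) (a :: h) * ts j (a :: h) b)
      = ∑ j, (c j * ts j [] a.2) * tProb (fun h' => ts j (a :: h')) h
          * ts j (a :: h) b := by
    exact Finset.sum_congr rfl fun j _ => by
      simp only [tProb]; ring
  unfold tmixRaw
  rw [hD, hN]

lemma mixD_nonneg {c : J → ℝ} {ts : J → List (I × J) → J → ℝ}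
    (hc : ∀ j, 0 ≤ c j) (hts : ∀ j h, ts j h ∈ stdSimplex ℝ J)
    (h : List (I × J)) : 0 ≤ mixD c ts h :=
  Finset.sum_nonneg fun j _ =>
    mul_nonneg (hc j) (tProb_nonneg (fun h' => hts j h') h)

lemma tmixRaw_mem [Nonempty J] {c : J → ℝ} {ts : J → List (I × J) → J → ℝ}
    (hc : ∀ j, 0 ≤ c j) (hts : ∀ j h, ts j h ∈ stdSimplex ℝ J)
    (h : List (I × J)) : tmixRaw c ts h ∈ stdSimplex ℝ J := by
  unfold tmixRaw
  by_cases hpos : 0 < mixD c ts h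
  · simp only [if_pos hpos]
    constructor
    · intro b
      apply div_nonneg _ hpos.le
      exact Finset.sum_nonneg fun j _ => mul_nonneg
        (mul_nonneg (hc j) (tProb_nonneg (fun h' => hts j h') h)) ((hts j h).1 b)
    · rw [← Finset.sum_div]
      rw [Finset.sum_comm]
      have : ∀ j, ∑ b, c j * tProb (ts j) h * ts j h b
          = c j * tProb (ts j) h := by
        intro j
        rw [← Finset.mul_sum, (hts j h).2, mul_one]
      rw [Finset.sum_congr rfl fun j _ => this j]
      exact div_self (ne_of_gt hpos)
  · simp only [if_neg hpos]
    constructor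
    · intro b; positivity
    · have hJ : (Fintype.card J : ℝ) ≠ 0 := by exact_mod_cast Fintype.card_ne_zero
      simp [Finset.sum_const, Finset.card_univ, nsmul_eq_mul, mul_inv_cancel₀ hJ]

lemma tProb_tmixRaw [Nonempty J] :
    ∀ (h : List (I × J)) (c : J → ℝ) (ts : J → List (I × J) → J → ℝ),
      (∀ j, 0 ≤ c j) → (∀ j h', ts j h' ∈ stdSimplex ℝ J) →
      (∑ j, c j) * tProb (tmixRaw c ts) h = mixD c ts h := by
  intro h
  induction h with
  | nil => intro c ts hc hts; simp [tProb, mixD]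
  | cons a h ih =>
      intro c ts hc hts
      have hRHS : mixD c ts (a :: h)
          = mixD (fun j => c j * ts j [] a.2) (fun j h' => ts j (a :: h')) h := by
        unfold mixD
        exact Finset.sum_congr rfl fun j _ => by
          show c j * tProb (ts j) (a :: h) = _
          simp only [tProb]; ring
      have hshift := tmixRaw_shift c ts a
      have hc' : ∀ j, 0 ≤ c j * ts j [] a.2 :=
        fun j => mul_nonneg (hc j) ((hts j []).1 a.2)
      have hts' : ∀ j h', ts j (a :: h') ∈ stdSimplex ℝ J := fun j h' => hts j (a :: h')
      have ih' := ih (fun j => c j * ts j [] a.2) (fun j h' => ts j (a :: h')) hc' hts'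
      show (∑ j, c j) * (tmixRaw c ts [] a.2
          * tProb (fun h' => tmixRaw c ts (a :: h')) h) = mixD c ts (a :: h)
      rw [hshift, hRHS, ← ih']
      by_cases hpos : 0 < ∑ j, c j
      · have hD0 : mixD c ts [] = ∑ j, c j := by
          unfold mixD
          exact Finset.sum_congr rfl fun j _ => by simp [tProb]
        have hmix0 : tmixRaw c ts [] a.2 = (∑ j, c j * ts j [] a.2) / (∑ j, c j) := by
          unfold tmixRaw
          rw [hD0, if_pos hpos]
          congr 1
          exact Finset.sum_congr rfl fun j _ => by simp [tProb]
        rw [hmix0]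
        field_simp
      · have hzero : ∀ j, c j = 0 := by
          have h0 : ∑ j, c j = 0 :=
            le_antisymm (not_lt.1 hpos) (Finset.sum_nonneg fun j _ => hc j)
          intro j
          exact (Finset.sum_eq_zero_iff_of_nonneg (fun j _ => hc j)).1 h0 j
            (Finset.mem_univ j)
        simp [hzero]

end Mix
set_option linter.unusedSectionVars false
section Mix2
variable {I J : Type*} [Fintype I] [Fintype J]

lemma mixD_mul_tmixRaw {c : J → ℝ} {ts : J → List (I × J) → J → ℝ}
    (hc : ∀ j, 0 ≤ c j) (hts : ∀ j h, ts j h ∈ stdSimplex ℝ J)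
    (h : List (I × J)) (b : J) :
    mixD c ts h * tmixRaw c ts h b = ∑ j, c j * tProb (ts j) h * ts j h b := by
  unfold tmixRaw
  by_cases hpos : 0 < mixD c ts h
  · rw [if_pos hpos, mul_div_cancel₀ _ (ne_of_gt hpos)]
  · have h0 : mixD c ts h = 0 :=
      le_antisymm (not_lt.1 hpos) (mixD_nonneg hc hts h)
    have hzero : ∀ j, c j * tProb (ts j) h = 0 := by
      intro j
      have := (Finset.sum_eq_zero_iff_of_nonneg
        (fun j _ => mul_nonneg (hc j) (tProb_nonneg (fun h' => hts j h') h))).1 h0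
      exact this j (Finset.mem_univ j)
    rw [h0, zero_mul]
    symm
    exact Finset.sum_eq_zero fun j _ => by rw [hzero j, zero_mul]

lemma stagePay_tmixRaw [Nonempty J] {c : J → ℝ} {ts : J → List (I × J) → J → ℝ}
    (hc : ∀ j, 0 ≤ c j) (hc1 : ∑ j, c j = 1)
    (hts : ∀ j h, ts j h ∈ stdSimplex ℝ J)
    {s : List (I × J) → I → ℝ} (hs : ∀ h, s h ∈ stdSimplex ℝ I)
    (g : I → J → ℝ) (m : ℕ) :
    stagePay s (tmixRaw c ts) g m = ∑ j, c j * stagePay s (ts j) g m := by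
  have key : ∀ H : List (I × J),
      probH s (tmixRaw c ts) H * (∑ i, ∑ b, s H i * tmixRaw c ts H b * g i b)
        = ∑ j, c j * (probH s (ts j) H * (∑ i, ∑ b, s H i * ts j H b * g i b)) := by
    intro H
    have htp : tProb (tmixRaw c ts) H = mixD c ts H := by
      have := tProb_tmixRaw H c ts hc hts
      rwa [hc1, one_mul] at this
    rw [probH_eq, htp]
    have expand : sProb s H * mixD c ts H * (∑ i, ∑ b, s H i * tmixRaw c ts H b * g i b)
        = ∑ i, ∑ b, s H i * g i b * sProb s H * (mixD c ts H * tmixRaw c ts H b) := by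
      rw [Finset.mul_sum]
      refine Finset.sum_congr rfl fun i _ => ?_
      rw [Finset.mul_sum]
      exact Finset.sum_congr rfl fun b _ => by ring
    rw [expand]
    have expand2 : ∀ i b, s H i * g i b * sProb s H * (mixD c ts H * tmixRaw c ts H b)
        = ∑ j, c j * (probH s (ts j) H * (s H i * ts j H b * g i b)) := by
      intro i b
      rw [mixD_mul_tmixRaw hc hts, Finset.mul_sum]
      refine Finset.sum_congr rfl fun j _ => ?_
      rw [probH_eq]
      ring
    rw [Finset.sum_congr rfl fun i _ => Finset.sum_congr rfl fun b _ => expand2 i b]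
    have rhs_expand : ∀ j : J,
        c j * (probH s (ts j) H * (∑ i, ∑ b, s H i * ts j H b * g i b))
          = ∑ i, ∑ b, c j * (probH s (ts j) H * (s H i * ts j H b * g i b)) := by
      intro j
      simp only [Finset.mul_sum]
    rw [Finset.sum_congr rfl fun j (_ : j ∈ Finset.univ) => rhs_expand j]
    calc ∑ i, ∑ b, ∑ j, c j * (probH s (ts j) H * (s H i * ts j H b * g i b))
        = ∑ i, ∑ j, ∑ b, c j * (probH s (ts j) H * (s H i * ts j H b * g i b)) :=
          Finset.sum_congr rfl fun i _ => Finset.sum_comm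
      _ = ∑ j, ∑ i, ∑ b, c j * (probH s (ts j) H * (s H i * ts j H b * g i b)) :=
          Finset.sum_comm
  unfold stagePay
  rw [Finset.sum_congr rfl fun h (_ : h ∈ Finset.univ) => key (List.ofFn h)]
  rw [Finset.sum_comm]
  refine Finset.sum_congr rfl fun j _ => ?_
  rw [Finset.mul_sum]

end Mix2
set_option linter.unusedSectionVars false
section Mix3
variable {K L I J : Type*} [Fintype K] [Fintype L] [Fintype I] [Fintype J]

/-- Kuhn mixture of player-2 strategies as a `Strat` -/
noncomputable def mixStrat [Nonempty J] (c : J → ℝ) (hc : ∀ j, 0 ≤ c j)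
    (ts : J → Strat I J L J) : Strat I J L J :=
  ⟨fun l => tmixRaw c (fun j => (ts j).1 l),
   fun l h => tmixRaw_mem hc (fun j h' => (ts j).2 l h') h⟩

lemma payA_mixStrat [Nonempty J] {θ' : ℕ → ℝ} (hsum : Summable θ')
    (hnn : ∀ m, 0 ≤ θ' m) (G : K → L → I → J → ℝ) (π : K × L → ℝ) (ζ : K → ℝ)
    (s : Strat I J K I) {c : J → ℝ} (hc : ∀ j, 0 ≤ c j) (hc1 : ∑ j, c j = 1)
    (ts : J → Strat I J L J) :
    payA θ' G π ζ s (mixStrat c hc ts) = ∑ j, c j * payA θ' G π ζ s (ts j) := by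
  have hGam : ∀ (k : K) (l : L),
      (∑' m, θ' m * stagePay (s.1 k) ((mixStrat c hc ts).1 l) (G k l) m)
        = ∑ j, c j * ∑' m, θ' m * stagePay (s.1 k) ((ts j).1 l) (G k l) m := by
    intro k l
    have h1 : ∀ m, θ' m * stagePay (s.1 k) ((mixStrat c hc ts).1 l) (G k l) m
        = ∑ j, c j * (θ' m * stagePay (s.1 k) ((ts j).1 l) (G k l) m) := by
      intro m
      show θ' m * stagePay (s.1 k) (tmixRaw c (fun j => (ts j).1 l)) (G k l) m = _
      rw [stagePay_tmixRaw hc hc1 (fun j h' => (ts j).2 l h') (s.2 k), Finset.mul_sum]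
      exact Finset.sum_congr rfl fun j _ => by ring
    rw [tsum_congr h1, Summable.tsum_finsetSum]
    · exact Finset.sum_congr rfl fun j _ => by rw [← tsum_mul_left]
    · intro j _
      exact (summable_stage hsum hnn (s.2 k) ((ts j).2 l) (G k l)).mul_left _
  unfold payA
  rw [Finset.sum_congr rfl fun k (_ : k ∈ Finset.univ) =>
    Finset.sum_congr rfl fun l (_ : l ∈ Finset.univ) => by rw [hGam k l]]
  calc ∑ k, ∑ l, π (k, l) * ζ k *
        ∑ j, c j * ∑' m, θ' m * stagePay (s.1 k) ((ts j).1 l) (G k l) m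
      = ∑ k, ∑ l, ∑ j, c j * (π (k, l) * ζ k *
          ∑' m, θ' m * stagePay (s.1 k) ((ts j).1 l) (G k l) m) := by
        refine Finset.sum_congr rfl fun k _ => Finset.sum_congr rfl fun l _ => ?_
        rw [Finset.mul_sum]
        exact Finset.sum_congr rfl fun j _ => by ring
    _ = ∑ k, ∑ j, ∑ l, c j * (π (k, l) * ζ k *
          ∑' m, θ' m * stagePay (s.1 k) ((ts j).1 l) (G k l) m) :=
        Finset.sum_congr rfl fun k _ => Finset.sum_comm
    _ = ∑ j, ∑ k, ∑ l, c j * (π (k, l) * ζ k *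
          ∑' m, θ' m * stagePay (s.1 k) ((ts j).1 l) (G k l) m) :=
        Finset.sum_comm
    _ = ∑ j, c j * ∑ k, ∑ l, π (k, l) * ζ k *
          ∑' m, θ' m * stagePay (s.1 k) ((ts j).1 l) (G k l) m := by
        refine Finset.sum_congr rfl fun j _ => ?_
        simp only [Finset.mul_sum]

end Mix3
set_option linter.unusedSectionVars false
section Helpers
variable {K L I J : Type*} [Fintype K] [Fintype L] [Fintype I] [Fintype J]
  [Nonempty K] [Nonempty L] [Nonempty I] [Nonempty J]

lemma stdSimplex_nonempty_fun : Nonempty (stdSimplex ℝ K) := by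
  refine ⟨⟨fun _ => (Fintype.card K : ℝ)⁻¹, ⟨fun a => by positivity, ?_⟩⟩⟩
  have hA : (Fintype.card K : ℝ) ≠ 0 := by exact_mod_cast Fintype.card_ne_zero
  simp [Finset.sum_const, Finset.card_univ, nsmul_eq_mul, mul_inv_cancel₀ hA]

lemma bddAbove_hDual_range {θ' : ℕ → ℝ} (hsum : Summable θ') (hnn : ∀ m, 0 ≤ θ' m)
    (G : K → L → I → J → ℝ) (x : K → ℝ) {Q : K → L → ℝ}
    (hQ : ∀ k, Q k ∈ stdSimplex ℝ L) (ζ : K → ℝ) (t : Strat I J L J) :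
    BddAbove (Set.range fun ps : stdSimplex ℝ K × Strat I J K I =>
      hDual θ' G x Q ζ (ps.1 : K → ℝ) ps.2 t) := by
  refine ⟨dualBound θ' G x ζ, ?_⟩
  rintro v ⟨ps, rfl⟩
  exact (abs_le.1 (abs_hDual_le hsum hnn G x hQ ζ ps.1.2 ps.2 t)).2

lemma wPlus_le_bound {θ' : ℕ → ℝ} (hsum : Summable θ') (hnn : ∀ m, 0 ≤ θ' m)
    (G : K → L → I → J → ℝ) (x : K → ℝ) {Q : K → L → ℝ}
    (hQ : ∀ k, Q k ∈ stdSimplex ℝ L) (ζ : K → ℝ) (t₀ : Strat I J L J) {B : ℝ}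
    (hB : ∀ (p : K → ℝ), p ∈ stdSimplex ℝ K → ∀ s : Strat I J K I,
      hDual θ' G x Q ζ p s t₀ ≤ B) :
    wPlus θ' G x Q ζ ≤ B := by
  have : Nonempty (stdSimplex ℝ K) := stdSimplex_nonempty_fun
  have hA := bddAbove_hDual_range (I := I) hsum hnn G x hQ ζ
  have hlow : BddBelow (Set.range fun t : Strat I J L J =>
      ⨆ ps : stdSimplex ℝ K × Strat I J K I,
        hDual θ' G x Q ζ (ps.1 : K → ℝ) ps.2 t) := by
    refine ⟨-dualBound θ' G x ζ, ?_⟩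
    rintro v ⟨t, rfl⟩
    obtain ⟨ps⟩ := (inferInstance : Nonempty (stdSimplex ℝ K × Strat I J K I))
    refine le_trans ?_ (le_ciSup (hA t) ps)
    exact (abs_le.1 (abs_hDual_le hsum hnn G x hQ ζ ps.1.2 ps.2 t)).1
  calc wPlus θ' G x Q ζ
      ≤ ⨆ ps : stdSimplex ℝ K × Strat I J K I,
          hDual θ' G x Q ζ (ps.1 : K → ℝ) ps.2 t₀ := ciInf_le hlow t₀
    _ ≤ B := ciSup_le fun ps => hB (ps.1 : K → ℝ) ps.1.2 ps.2

lemma exists_eps_opt {θ' : ℕ → ℝ} (hsum : Summable θ') (hnn : ∀ m, 0 ≤ θ' m)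
    (G : K → L → I → J → ℝ) (x : K → ℝ) {Q : K → L → ℝ}
    (hQ : ∀ k, Q k ∈ stdSimplex ℝ L) (ζ : K → ℝ) {ε : ℝ} (hε : 0 < ε) :
    ∃ t : Strat I J L J, ∀ (p : K → ℝ), p ∈ stdSimplex ℝ K →
      ∀ s : Strat I J K I, hDual θ' G x Q ζ p s t ≤ wPlus θ' G x Q ζ + ε := by
  have : Nonempty (stdSimplex ℝ K) := stdSimplex_nonempty_fun
  have hlt : wPlus (I := I) (J := J) θ' G x Q ζ < wPlus (I := I) (J := J) θ' G x Q ζ + ε :=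
    lt_add_of_pos_right _ hε
  obtain ⟨t, ht⟩ := exists_lt_of_ciInf_lt hlt
  refine ⟨t, fun p hp s => ?_⟩
  have := le_ciSup (bddAbove_hDual_range hsum hnn G x hQ ζ t) (⟨⟨p, hp⟩, s⟩ :
    stdSimplex ℝ K × Strat I J K I)
  exact this.trans ht.le

end Helpers
set_option linter.unusedSectionVars false
section DirB
variable {K L I J : Type*} [Fintype K] [Fintype L] [Fintype I] [Fintype J]
  [Nonempty K] [Nonempty L] [Nonempty I] [Nonempty J]

lemma wPlus_sum_le {θ' : ℕ → ℝ} (hsum : Summable θ') (hnn : ∀ m, 0 ≤ θ' m)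
    (G : K → L → I → J → ℝ) {Q : K → L → ℝ} (hQ : ∀ k, Q k ∈ stdSimplex ℝ L)
    {c : J → ℝ} (hc : c ∈ stdSimplex ℝ J) (z : J → K → ℝ) :
    wPlus (I := I) θ' G (fun k => ∑ j, z j k) Q (fun _ => 1)
      ≤ ∑ j, wPlus θ' G (z j) Q (fun _ => c j) := by
  refine le_of_forall_pos_le_add fun ε hε => ?_
  have hcard : (0 : ℝ) < Fintype.card J := by
    exact_mod_cast Fintype.card_pos
  set ε' := ε / Fintype.card J with hε'def
  have hε' : 0 < ε' := div_pos hε hcard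
  have hchoice : ∀ j : J, ∃ t : Strat I J L J, ∀ (p : K → ℝ), p ∈ stdSimplex ℝ K →
      ∀ s : Strat I J K I, hDual θ' G (z j) Q (fun _ => c j) p s t
        ≤ wPlus θ' G (z j) Q (fun _ => c j) + ε' :=
    fun j => exists_eps_opt hsum hnn G (z j) hQ (fun _ => c j) hε'
  choose tj htj using hchoice
  refine wPlus_le_bound hsum hnn G _ hQ _ (mixStrat c hc.1 tj) ?_
  intro p hp s
  have hsplit : hDual θ' G (fun k => ∑ j, z j k) Q (fun _ => 1) p s (mixStrat c hc.1 tj)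
      = ∑ j, hDual θ' G (z j) Q (fun _ => c j) p s (tj j) := by
    unfold hDual
    rw [payA_mixStrat hsum hnn G _ _ s hc.1 hc.2 tj]
    rw [Finset.sum_sub_distrib]
    congr 1
    · refine Finset.sum_congr rfl fun j _ => ?_
      exact (payA_zeta_const θ' G _ (c j) s (tj j)).symm
    · rw [Finset.sum_comm]
      exact Finset.sum_congr rfl fun k _ => Finset.mul_sum _ _ _
  rw [hsplit]
  calc ∑ j, hDual θ' G (z j) Q (fun _ => c j) p s (tj j)
      ≤ ∑ j, (wPlus θ' G (z j) Q (fun _ => c j) + ε') :=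
        Finset.sum_le_sum fun j _ => htj j p hp s
    _ = (∑ j, wPlus θ' G (z j) Q (fun _ => c j)) + Fintype.card J * ε' := by
        rw [Finset.sum_add_distrib]
        congr 1
        simp [Finset.sum_const, Finset.card_univ, nsmul_eq_mul]
    _ = (∑ j, wPlus θ' G (z j) Q (fun _ => c j)) + ε := by
        rw [hε'def, mul_div_cancel₀ _ (ne_of_gt hcard)]

end DirB
set_option linter.unusedSectionVars false
set_option maxHeartbeats 1000000
section DirA
variable {K L I J : Type*} [Fintype K] [Fintype L] [Fintype I] [Fintype J]
  [Nonempty K] [Nonempty L] [Nonempty I] [Nonempty J]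

lemma wPlus_le_recursive
    {θ : ℕ → ℝ} (hθ0 : ∀ m, 0 ≤ θ m) (hθsum : Summable θ) (hθlt : θ 0 < 1)
    {θplus : ℕ → ℝ} (hθplus : ∀ m, θplus m = θ (m + 1) / (1 - θ 0))
    (G : K → L → I → J → ℝ) (x : K → ℝ) {Q : K → L → ℝ}
    (hQ : ∀ k, Q k ∈ stdSimplex ℝ L)
    {τbar : J → ℝ} (hτbar : τbar ∈ stdSimplex ℝ J)
    (GQ : I → K → ℝ) (hGQ : ∀ i k, GQ i k = ∑ l, ∑ j, Q k l * τbar j * G k l i j) :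
    wPlus (I := I) θ G x Q (fun _ => 1)
      ≤ (1 - θ 0) * ⨆ i : I, wPlus θplus G
          (fun k => (x k - θ 0 * GQ i k) / (1 - θ 0)) Q (fun _ => 1) := by
  have h1θ : 0 < 1 - θ 0 := by linarith
  have hθpsum : Summable θplus := by
    have : Summable (fun m => θ (m + 1)) := (summable_nat_add_iff 1).2 hθsum
    have := this.div_const (1 - θ 0)
    exact this.congr fun m => (hθplus m).symm
  have hθpnn : ∀ m, 0 ≤ θplus m := fun m => by
    rw [hθplus]; exact div_nonneg (hθ0 _) h1θ.le
  set y : I → K → ℝ := fun i k => (x k - θ 0 * GQ i k) / (1 - θ 0) with hy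
  set W : I → ℝ := fun i => wPlus θplus G (y i) Q (fun _ => 1) with hW
  have hkey : ∀ i k, θ 0 * GQ i k + (1 - θ 0) * y i k = x k := by
    intro i k
    rw [hy]
    field_simp
    ring
  set SW := ⨆ i, W i with hSW
  have hWle : ∀ i, W i ≤ SW :=
    fun i => le_ciSup (Set.Finite.bddAbove (Set.finite_range W)) i
  show wPlus (I := I) θ G x Q (fun _ => 1) ≤ (1 - θ 0) * SW
  refine le_of_forall_pos_le_add fun ε hε => ?_
  set ε' := ε / (1 - θ 0) with hε'def
  have hε' : 0 < ε' := div_pos hε h1θ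
  have hchoice : ∀ i : I, ∃ t : Strat I J L J, ∀ (p : K → ℝ), p ∈ stdSimplex ℝ K →
      ∀ s : Strat I J K I, hDual θplus G (y i) Q (fun _ => 1) p s t ≤ W i + ε' :=
    fun i => exists_eps_opt hθpsum hθpnn G (y i) hQ (fun _ => 1) hε'
  choose ti hti using hchoice
  -- the strategy: play τbar at the first stage, then the ε-optimal reply to i
  refine wPlus_le_bound hθsum hθ0 G x hQ _
    (⟨fun l h => match h with
      | [] => τbar
      | a :: h' => (ti a.1).1 l h',
      fun l h => by
        cases h with
        | nil => exact hτbar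
        | cons a h' => exact (ti a.1).2 l h'⟩) ?_
  intro p hp s
  set tstar : Strat I J L J :=
    (⟨fun l h => match h with
      | [] => τbar
      | a :: h' => (ti a.1).1 l h',
      fun l h => by
        cases h with
        | nil => exact hτbar
        | cons a h' => exact (ti a.1).2 l h'⟩) with htstar
  set σ : K → I → ℝ := fun k => s.1 k [] with hσ
  set q : I → K → ℝ := fun i k => p k * σ k i with hq
  have hqnn : ∀ i k, 0 ≤ q i k := fun i k =>
    mul_nonneg (hp.1 k) ((s.2 k []).1 i)
  -- continuation strategies of player 1
  set sc : I × J → Strat I J K I :=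
    fun a => ⟨fun k h => s.1 k (a :: h), fun k h => s.2 k (a :: h)⟩ with hsc
  -- continuation payoffs
  set Γp : I × J → K → L → ℝ := fun a k l =>
    ∑' m, θplus m * stagePay ((sc a).1 k) ((ti a.1).1 l) (G k l) m with hΓp
  -- one-stage decomposition of the weighted payoff
  have hGam : ∀ (k : K) (l : L),
      (∑' m, θ m * stagePay (s.1 k) (tstar.1 l) (G k l) m)
        = θ 0 * (∑ i', ∑ j', σ k i' * τbar j' * G k l i' j')
          + ∑ a : I × J, σ k a.1 * τbar a.2 * ((1 - θ 0) * Γp a k l) := by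
    intro k l
    have hsplit := tsum_stage_split hθsum hθ0 (s.2 k) (tstar.2 l) (G k l)
    have hts0 : tstar.1 l [] = τbar := rfl
    rw [hsplit, hts0]
    congr 1
    refine Finset.sum_congr rfl fun a _ => ?_
    have hshift : (fun h => tstar.1 l (a :: h)) = (ti a.1).1 l := rfl
    rw [hshift]
    have hconv : ∑' m, θ (m + 1) *
        stagePay (fun h => s.1 k (a :: h)) ((ti a.1).1 l) (G k l) m
        = (1 - θ 0) * Γp a k l := by
      rw [hΓp, ← tsum_mul_left]
      refine tsum_congr fun m => ?_
      rw [hθplus]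
      have hsceq : (sc a).1 k = fun h => s.1 k (a :: h) := rfl
      rw [hsceq]
      field_simp
    rw [hconv]
  -- expanded form of the auxiliary payoff against tstar
  have hpay : payA θ G (fun kl => p kl.1 * Q kl.1 kl.2) (fun _ => 1) s tstar
      = θ 0 * (∑ i, ∑ k, q i k * GQ i k)
        + ∑ a : I × J, τbar a.2 * ((1 - θ 0) *
            payA θplus G (fun kl => q a.1 kl.1 * Q kl.1 kl.2) (fun _ => 1)
              (sc a) (ti a.1)) := by
    have hPa : ∀ a : I × J,
        payA θplus G (fun kl => q a.1 kl.1 * Q kl.1 kl.2) (fun _ => 1)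
          (sc a) (ti a.1)
        = ∑ k, ∑ l, q a.1 k * Q k l * Γp a k l := by
      intro a
      simp only [payA, mul_one, hΓp]
    have step1 : payA θ G (fun kl => p kl.1 * Q kl.1 kl.2) (fun _ => 1) s tstar
        = ∑ k, ∑ l, (θ 0 * (p k * Q k l *
            (∑ i', ∑ j', σ k i' * τbar j' * G k l i' j'))
          + ∑ a : I × J, τbar a.2 * ((1 - θ 0) * (q a.1 k * Q k l * Γp a k l))) := by
      simp only [payA, mul_one]
      refine Finset.sum_congr rfl fun k _ => Finset.sum_congr rfl fun l _ => ?_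
      rw [hGam k l, mul_add]
      congr 1
      · ring
      · rw [Finset.mul_sum]
        refine Finset.sum_congr rfl fun a _ => ?_
        simp only [hq]
        ring
    rw [step1, Finset.sum_congr rfl fun k (_ : k ∈ Finset.univ) =>
      Finset.sum_add_distrib, Finset.sum_add_distrib]
    congr 1
    · -- first-stage part
      have hU : ∀ k : K, ∑ l, θ 0 * (p k * Q k l *
          (∑ i', ∑ j', σ k i' * τbar j' * G k l i' j'))
          = θ 0 * ∑ i, q i k * GQ i k := by
        intro k
        rw [← Finset.mul_sum]
        congr 1
        calc ∑ l, p k * Q k l * (∑ i', ∑ j', σ k i' * τbar j' * G k l i' j')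
            = ∑ l, ∑ i', ∑ j', p k * σ k i' * (Q k l * τbar j' * G k l i' j') := by
              refine Finset.sum_congr rfl fun l _ => ?_
              rw [Finset.mul_sum]
              refine Finset.sum_congr rfl fun i' _ => ?_
              rw [Finset.mul_sum]
              exact Finset.sum_congr rfl fun j' _ => by ring
          _ = ∑ i', ∑ l, ∑ j', p k * σ k i' * (Q k l * τbar j' * G k l i' j') :=
              Finset.sum_comm
          _ = ∑ i, q i k * GQ i k := by
              refine Finset.sum_congr rfl fun i _ => ?_
              rw [hGQ i k]
              simp only [hq, Finset.mul_sum]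
      rw [Finset.sum_congr rfl fun k (_ : k ∈ Finset.univ) => hU k, ← Finset.mul_sum]
      rw [Finset.sum_comm]
    · -- continuation part
      calc ∑ k, ∑ l, ∑ a : I × J, τbar a.2 * ((1 - θ 0) * (q a.1 k * Q k l * Γp a k l))
          = ∑ k, ∑ a : I × J, ∑ l, τbar a.2 * ((1 - θ 0) * (q a.1 k * Q k l * Γp a k l)) :=
            Finset.sum_congr rfl fun k _ => Finset.sum_comm
        _ = ∑ a : I × J, ∑ k, ∑ l, τbar a.2 * ((1 - θ 0) * (q a.1 k * Q k l * Γp a k l)) :=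
            Finset.sum_comm
        _ = ∑ a : I × J, τbar a.2 * ((1 - θ 0) *
              payA θplus G (fun kl => q a.1 kl.1 * Q kl.1 kl.2) (fun _ => 1)
                (sc a) (ti a.1)) := by
            refine Finset.sum_congr rfl fun a _ => ?_
            rw [hPa a]
            simp only [Finset.mul_sum]
  -- bound on the continuation payoffs
  have hPa_le : ∀ a : I × J,
      payA θplus G (fun kl => q a.1 kl.1 * Q kl.1 kl.2) (fun _ => 1) (sc a) (ti a.1)
        ≤ (∑ k, q a.1 k) * (W a.1 + ε') + ∑ k, q a.1 k * y a.1 k := by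
    intro a
    by_cases hpos : 0 < ∑ k, q a.1 k
    · have hp' : (fun k => q a.1 k / ∑ k', q a.1 k') ∈ stdSimplex ℝ K := by
        constructor
        · intro k; exact div_nonneg (hqnn _ k) hpos.le
        · rw [← Finset.sum_div, div_self (ne_of_gt hpos)]
      have hscale : payA θplus G (fun kl => q a.1 kl.1 * Q kl.1 kl.2) (fun _ => 1)
          (sc a) (ti a.1)
          = (∑ k', q a.1 k') * payA θplus G
              (fun kl => q a.1 kl.1 / (∑ k', q a.1 k') * Q kl.1 kl.2) (fun _ => 1)
              (sc a) (ti a.1) := by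
        rw [← payA_pi_smul]
        congr 1
        funext kl
        field_simp
      have hd := hti a.1 _ hp' (sc a)
      unfold hDual at hd
      have hd' : payA θplus G
          (fun kl => q a.1 kl.1 / (∑ k', q a.1 k') * Q kl.1 kl.2) (fun _ => 1)
          (sc a) (ti a.1)
          ≤ W a.1 + ε' + ∑ k, q a.1 k / (∑ k', q a.1 k') * y a.1 k := by
        have := hd
        simp only [hW] at this ⊢
        linarith [this]
      calc payA θplus G (fun kl => q a.1 kl.1 * Q kl.1 kl.2) (fun _ => 1)
            (sc a) (ti a.1)
          = (∑ k', q a.1 k') * payA θplus G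
              (fun kl => q a.1 kl.1 / (∑ k', q a.1 k') * Q kl.1 kl.2) (fun _ => 1)
              (sc a) (ti a.1) := hscale
        _ ≤ (∑ k', q a.1 k') * (W a.1 + ε'
              + ∑ k, q a.1 k / (∑ k', q a.1 k') * y a.1 k) :=
            mul_le_mul_of_nonneg_left hd' hpos.le
        _ = (∑ k, q a.1 k) * (W a.1 + ε') + ∑ k, q a.1 k * y a.1 k := by
            rw [mul_add, Finset.mul_sum]
            congr 1
            refine Finset.sum_congr rfl fun k _ => ?_
            field_simp
    · have h0 : ∑ k, q a.1 k = 0 :=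
        le_antisymm (not_lt.1 hpos) (Finset.sum_nonneg fun k _ => hqnn _ k)
      have hq0 : ∀ k, q a.1 k = 0 := fun k =>
        (Finset.sum_eq_zero_iff_of_nonneg fun k _ => hqnn _ k).1 h0 k
          (Finset.mem_univ k)
      have hPa0 : payA θplus G (fun kl => q a.1 kl.1 * Q kl.1 kl.2) (fun _ => 1)
          (sc a) (ti a.1) = 0 := by
        simp [payA, hq0]
      rw [hPa0, h0]
      have : ∑ k, q a.1 k * y a.1 k = 0 :=
        Finset.sum_eq_zero fun k _ => by rw [hq0 k, zero_mul]
      rw [this, zero_mul, add_zero]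
  -- put everything together
  have hsum_q : ∀ k, ∑ i, q i k = p k := by
    intro k
    simp only [hq]
    rw [← Finset.mul_sum, hσ]
    rw [(s.2 k []).2, mul_one]
  have hxsum : θ 0 * (∑ i, ∑ k, q i k * GQ i k)
      + (1 - θ 0) * (∑ i, ∑ k, q i k * y i k) = ∑ k, p k * x k := by
    calc θ 0 * (∑ i, ∑ k, q i k * GQ i k)
          + (1 - θ 0) * (∑ i, ∑ k, q i k * y i k)
        = ∑ i, ∑ k, q i k * (θ 0 * GQ i k + (1 - θ 0) * y i k) := by
          rw [Finset.mul_sum, Finset.mul_sum, ← Finset.sum_add_distrib]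
          refine Finset.sum_congr rfl fun i _ => ?_
          rw [Finset.mul_sum, Finset.mul_sum, ← Finset.sum_add_distrib]
          exact Finset.sum_congr rfl fun k _ => by ring
      _ = ∑ i, ∑ k, q i k * x k := by
          refine Finset.sum_congr rfl fun i _ =>
            Finset.sum_congr rfl fun k _ => ?_
          rw [hkey i k]
      _ = ∑ k, ∑ i, q i k * x k := Finset.sum_comm
      _ = ∑ k, p k * x k := by
          refine Finset.sum_congr rfl fun k _ => ?_
          rw [← Finset.sum_mul, hsum_q k]
  have hπ1 : ∑ i, ∑ k, q i k = 1 := by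
    rw [Finset.sum_comm]
    calc ∑ k, ∑ i, q i k = ∑ k, p k := Finset.sum_congr rfl fun k _ => hsum_q k
      _ = 1 := hp.2
  have hWbound : ∑ i, (∑ k, q i k) * (W i + ε') ≤ SW + ε' := by
    calc ∑ i, (∑ k, q i k) * (W i + ε')
        ≤ ∑ i, (∑ k, q i k) * (SW + ε') :=
          Finset.sum_le_sum fun i _ => mul_le_mul_of_nonneg_left
            (by linarith [hWle i])
            (Finset.sum_nonneg fun k _ => hqnn i k)
      _ = (∑ i, ∑ k, q i k) * (SW + ε') := by rw [Finset.sum_mul]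
      _ = SW + ε' := by rw [hπ1, one_mul]
  -- final chain
  have hsum_prod : ∑ a : I × J, τbar a.2 * ((1 - θ 0) *
        ((∑ k, q a.1 k) * (W a.1 + ε') + ∑ k, q a.1 k * y a.1 k))
      = (1 - θ 0) * (∑ i, ((∑ k, q i k) * (W i + ε') + ∑ k, q i k * y i k)) := by
    rw [Fintype.sum_prod_type, Finset.mul_sum]
    refine Finset.sum_congr rfl fun i _ => ?_
    show ∑ j : J, τbar j * ((1 - θ 0) *
        ((∑ k, q i k) * (W i + ε') + ∑ k, q i k * y i k)) = _
    rw [← Finset.sum_mul, hτbar.2, one_mul]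
  show hDual θ G x Q (fun _ => 1) p s tstar ≤ (1 - θ 0) * SW + ε
  unfold hDual
  rw [hpay]
  have hT2le : ∑ a : I × J, τbar a.2 * ((1 - θ 0) *
        payA θplus G (fun kl => q a.1 kl.1 * Q kl.1 kl.2) (fun _ => 1)
          (sc a) (ti a.1))
      ≤ ∑ a : I × J, τbar a.2 * ((1 - θ 0) *
        ((∑ k, q a.1 k) * (W a.1 + ε') + ∑ k, q a.1 k * y a.1 k)) :=
    Finset.sum_le_sum fun a _ => mul_le_mul_of_nonneg_left
      (mul_le_mul_of_nonneg_left (hPa_le a) h1θ.le) (hτbar.1 a.2)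
  have hfinal : θ 0 * (∑ i, ∑ k, q i k * GQ i k)
      + ∑ a : I × J, τbar a.2 * ((1 - θ 0) *
        ((∑ k, q a.1 k) * (W a.1 + ε') + ∑ k, q a.1 k * y a.1 k))
      - ∑ k, p k * x k ≤ (1 - θ 0) * SW + ε := by
    rw [hsum_prod]
    have expand : (1 - θ 0) * (∑ i, ((∑ k, q i k) * (W i + ε') + ∑ k, q i k * y i k))
        = (1 - θ 0) * (∑ i, (∑ k, q i k) * (W i + ε'))
          + (1 - θ 0) * (∑ i, ∑ k, q i k * y i k) := by
      rw [Finset.sum_add_distrib, mul_add]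
    rw [expand]
    have h2 : (1 - θ 0) * (∑ i, (∑ k, q i k) * (W i + ε')) ≤ (1 - θ 0) * (SW + ε') :=
      mul_le_mul_of_nonneg_left hWbound h1θ.le
    have h3 : (1 - θ 0) * (SW + ε') = (1 - θ 0) * SW + ε := by
      rw [mul_add, hε'def, mul_div_cancel₀ _ (ne_of_gt h1θ)]
    linarith [hxsum, h2, h3.le, h3.ge]
  linarith [hT2le, hfinal]

end DirA

/-- if the minimum in the dual recursive formula is attained at a
pair `(τ,(x_{ij}))` with `τ` non-revealing (`τ^ℓ = τ̄` for all `ℓ`), then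
`w_θ(x,Q) = (1−θ_1)·max_{i∈I} w_{θ⁺}((x−θ_1G^Q_{iτ̄})/(1−θ_1), Q)`, where
`w_θ(x,Q) := w_θ(x,Q;𝟏)`.  Attainment at `(τ,(x_{ij}))` is expressed by the
feasibility of `(τ,(x_{ij}))` together with the equality of
`(1−θ_1)·max_i Σ_j w_{θ⁺}(x_{ij},Q_j;ζ_j)` with the value `w_θ(x,Q)` of the
dual game (its minmax `wPlus`).  Stages are indexed from `0` (so `θ 0 = θ_1`);
maxima over the finite set `I` are written as suprema. -/
theorem stmt_17
    {K L I J : Type*} [Fintype K] [Fintype L] [Fintype I] [Fintype J]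
    [Nonempty K] [Nonempty L] [Nonempty I] [Nonempty J]
    (G : K → L → I → J → ℝ)
    (θ : ℕ → ℝ) (hθ0 : ∀ m, 0 ≤ θ m) (hθ1 : HasSum θ 1) (hθlt : θ 0 < 1)
    (θplus : ℕ → ℝ) (hθplus : ∀ m, θplus m = θ (m + 1) / (1 - θ 0))
    (x : K → ℝ) (Q : K → L → ℝ) (hQ : ∀ k, Q k ∈ stdSimplex ℝ L)
    (τ : L → J → ℝ) (hτ : ∀ l, τ l ∈ stdSimplex ℝ J)
    (τbar : J → ℝ) (hτbar : τbar ∈ stdSimplex ℝ J)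
    (hnonrev : ∀ l, τ l = τbar)
    (PQ : J → K → ℝ)
    (hPQ : ∀ j k, PQ j k = ∑ l, Q k l * τ l j)
    (Qj : J → K → L → ℝ)
    (hQj : ∀ j k l, Qj j k l =
      if 0 < PQ j k then Q k l * τ l j / PQ j k else Q k l)
    (ζj : J → K → ℝ)
    (hζj : ∀ j k, ζj j k = PQ j k)
    (GQ : I → K → ℝ)
    (hGQ : ∀ i k, GQ i k = ∑ l, ∑ j, Q k l * τbar j * G k l i j)
    (xf : I → J → K → ℝ)
    (hfeas : ∀ i k, (∑ j, xf i j k) = (x k - θ 0 * GQ i k) / (1 - θ 0))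
    (hattain : wPlus (I := I) (J := J) θ G x Q (fun _ => 1) =
      (1 - θ 0) * ⨆ i : I, ∑ j, wPlus θplus G (xf i j) (Qj j) (ζj j)) :
    wPlus (I := I) (J := J) θ G x Q (fun _ => 1) =
      (1 - θ 0) *
        ⨆ i : I, wPlus θplus G
          (fun k => (x k - θ 0 * GQ i k) / (1 - θ 0)) Q (fun _ => 1) := by
  have hθsum : Summable θ := hθ1.summable
  have h1θ : 0 < 1 - θ 0 := by linarith
  have hθpsum : Summable θplus := by
    have h' : Summable (fun m => θ (m + 1)) := (summable_nat_add_iff 1).2 hθsum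
    exact (h'.div_const (1 - θ 0)).congr fun m => (hθplus m).symm
  have hθpnn : ∀ m, 0 ≤ θplus m := fun m => by
    rw [hθplus]; exact div_nonneg (hθ0 _) h1θ.le
  have hPQτ : ∀ j k, PQ j k = τbar j := by
    intro j k
    rw [hPQ]
    calc ∑ l, Q k l * τ l j = ∑ l, Q k l * τbar j :=
          Finset.sum_congr rfl fun l _ => by rw [hnonrev l]
      _ = (∑ l, Q k l) * τbar j := by rw [Finset.sum_mul]
      _ = τbar j := by rw [(hQ k).2, one_mul]
  have hQj_eq : ∀ j, Qj j = Q := by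
    intro j
    funext k l
    rw [hQj]
    by_cases hpos : 0 < PQ j k
    · rw [if_pos hpos, hnonrev l, ← hPQτ j k,
        mul_div_assoc, div_self (ne_of_gt hpos), mul_one]
    · rw [if_neg hpos]
  have hζj_eq : ∀ j, ζj j = fun _ => τbar j := by
    intro j
    funext k
    rw [hζj, hPQτ]
  have hattain' : wPlus (I := I) (J := J) θ G x Q (fun _ => 1) =
      (1 - θ 0) * ⨆ i : I, ∑ j, wPlus θplus G (xf i j) Q (fun _ => τbar j) := by
    rw [hattain]
    congr 1
    refine iSup_congr fun i => Finset.sum_congr rfl fun j _ => ?_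
    rw [hQj_eq j, hζj_eq j]
  refine le_antisymm ?_ ?_
  · exact wPlus_le_recursive hθ0 hθsum hθlt hθplus G x hQ hτbar GQ hGQ
  · rw [hattain']
    refine mul_le_mul_of_nonneg_left ?_ h1θ.le
    refine ciSup_le fun i => ?_
    have hB := wPlus_sum_le (I := I) hθpsum hθpnn G hQ hτbar (xf i)
    have harg : (fun k => ∑ j, xf i j k)
        = fun k => (x k - θ 0 * GQ i k) / (1 - θ 0) :=
      funext fun k => hfeas i k
    rw [harg] at hB
    exact hB.trans (le_ciSup (Set.Finite.bddAbove (Set.finite_range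
      (fun i => ∑ j, wPlus (I := I) θplus G (xf i j) Q (fun _ => τbar j)))) i)
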